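/- For any finite poset P, Ω(P; −1) = (−1)^{|P|} if P is an antichain, and Ω(P; −1) = 0 otherwise. -/

import Mathlib

open scoped Classical
open Finset Function Polynomial

section OrderPoly

variable {Q : Type*} [Fintype Q] [PartialOrder Q]

lemma card_eq_sum_card_fiber {α β : Type*} [Fintype α] [Fintype β] (ι : α → β) :
    Nat.card α = ∑ b : β, Nat.card {a : α // ι a = b} := by
  simp only [Nat.card_eq_fintype_card]
  rw [← Fintype.card_sigma]
  exact Fintype.card_congr (Equiv.sigmaFiberEquiv ι).symm

/-- number of surjective monotone maps to a `k`-chain -/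
noncomputable def scQ (Q : Type*) [Fintype Q] [PartialOrder Q] (k : ℕ) : ℕ :=
  Nat.card {f : Q → Fin k // Monotone f ∧ Surjective f}

lemma scQ_eq_zero_of_lt {k : ℕ} (h : Fintype.card Q < k) : scQ Q k = 0 := by
  rw [scQ, Nat.card_eq_zero]
  left
  constructor
  rintro ⟨f, -, hs⟩
  have := Fintype.card_le_of_surjective f hs
  simp only [Fintype.card_fin] at this
  omega

noncomputable def fiberEquiv (n : ℕ) (T : Finset (Fin n)) :
    {g : {f : Q → Fin n // Monotone f} // Finset.image g.1 Finset.univ = T}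
      ≃ {h : Q → Fin T.card // Monotone h ∧ Surjective h} where
  toFun g :=
    have hmem : ∀ q, g.1.1 q ∈ T := fun q => by
      have := Finset.mem_image_of_mem g.1.1 (Finset.mem_univ q); rwa [g.2] at this
    ⟨fun q => (T.orderIsoOfFin rfl).symm ⟨g.1.1 q, hmem q⟩,
     fun a b hab => (T.orderIsoOfFin rfl).symm.monotone (Subtype.mk_le_mk.mpr (g.1.2 hab)),
     fun j => by
       have hT : ∀ x ∈ T, ∃ q, g.1.1 q = x := by
         intro x hx; rw [← g.2] at hx
         obtain ⟨q, -, hq⟩ := Finset.mem_image.mp hx; exact ⟨q, hq⟩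
       obtain ⟨q, hq⟩ := hT _ ((T.orderIsoOfFin rfl j).2)
       refine ⟨q, ?_⟩
       show (T.orderIsoOfFin rfl).symm ⟨g.1.1 q, hmem q⟩ = j
       have : (⟨g.1.1 q, hmem q⟩ : {x // x ∈ T}) = (T.orderIsoOfFin rfl) j := Subtype.ext hq
       rw [this]
       exact (T.orderIsoOfFin rfl).symm_apply_apply j⟩
  invFun h :=
    ⟨⟨fun q => (T.orderIsoOfFin rfl (h.1 q) : Fin n),
      fun a b hab => Subtype.coe_le_coe.mpr ((T.orderIsoOfFin rfl).monotone (h.2.1 hab))⟩, by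
      ext x
      simp only [Finset.mem_image, Finset.mem_univ, true_and]
      constructor
      · rintro ⟨q, rfl⟩; exact ((T.orderIsoOfFin rfl) (h.1 q)).2
      · intro hx
        obtain ⟨q, hq⟩ := h.2.2 ((T.orderIsoOfFin rfl).symm ⟨x, hx⟩)
        refine ⟨q, ?_⟩
        show ((T.orderIsoOfFin rfl) (h.1 q) : Fin n) = x
        rw [hq, (T.orderIsoOfFin rfl).apply_symm_apply]⟩
  left_inv g := by
    apply Subtype.ext; apply Subtype.ext; funext q
    show ((T.orderIsoOfFin rfl) ((T.orderIsoOfFin rfl).symm ⟨g.1.1 q, _⟩) : Fin n) = g.1.1 q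
    rw [OrderIso.apply_symm_apply]
  right_inv h := by
    apply Subtype.ext; funext q
    show (T.orderIsoOfFin rfl).symm ⟨((T.orderIsoOfFin rfl) (h.1 q) : Fin n), _⟩ = h.1 q
    have : (⟨((T.orderIsoOfFin rfl) (h.1 q) : Fin n), _⟩ : {x // x ∈ T})
        = (T.orderIsoOfFin rfl) (h.1 q) := Subtype.ext rfl
    rw [this, OrderIso.symm_apply_apply]

lemma countA (n : ℕ) :
    Nat.card {f : Q → Fin n // Monotone f}
      = ∑ k ∈ Finset.range (Fintype.card Q + 1), scQ Q k * n.choose k := by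
  rw [card_eq_sum_card_fiber (fun g : {f : Q → Fin n // Monotone f} =>
    Finset.image g.1 Finset.univ)]
  have h1 : ∀ T : Finset (Fin n),
      Nat.card {g : {f : Q → Fin n // Monotone f} // Finset.image g.1 Finset.univ = T}
        = scQ Q T.card := fun T => Nat.card_congr (fiberEquiv n T)
  have e0 : ∑ T : Finset (Fin n),
        Nat.card {g : {f : Q → Fin n // Monotone f} // Finset.image g.1 Finset.univ = T}
      = ∑ k ∈ Finset.range (n + 1), scQ Q k * n.choose k := by
    calc ∑ T : Finset (Fin n),
          Nat.card {g : {f : Q → Fin n // Monotone f} // Finset.image g.1 Finset.univ = T}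
        = ∑ T : Finset (Fin n), scQ Q T.card :=
          Finset.sum_congr rfl (fun T _ => h1 T)
      _ = ∑ k ∈ Finset.range (n + 1), ∑ T ∈ Finset.univ.filter
            (fun T : Finset (Fin n) => T.card = k), scQ Q T.card := by
          refine (Finset.sum_fiberwise_of_maps_to (fun T _ => ?_) _).symm
          simp only [Finset.mem_range]
          have := T.card_le_univ
          simp only [Finset.card_univ, Fintype.card_fin] at this
          omega
      _ = ∑ k ∈ Finset.range (n + 1), scQ Q k * n.choose k := by
          refine Finset.sum_congr rfl (fun k _ => ?_)
          rw [Finset.sum_congr rfl (fun T hT => by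
            rw [(Finset.mem_filter.mp hT).2]), Finset.sum_const, nsmul_eq_mul, mul_comm]
          have hps : Finset.univ.filter (fun T : Finset (Fin n) => T.card = k)
              = Finset.powersetCard k (Finset.univ : Finset (Fin n)) := by
            rw [Finset.powersetCard_eq_filter, Finset.powerset_univ]
          rw [hps, Finset.card_powersetCard, Finset.card_univ, Fintype.card_fin, Nat.cast_id]
  rw [e0]
  have e1 : ∑ k ∈ Finset.range (n + 1), scQ Q k * n.choose k
      = ∑ k ∈ Finset.range (n + Fintype.card Q + 1), scQ Q k * n.choose k :=
    Finset.sum_subset (Finset.range_subset_range.mpr (by omega)) (fun k _ hk => by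
      rw [Nat.choose_eq_zero_of_lt (by simp only [Finset.mem_range] at *; omega), mul_zero])
  have e2 : ∑ k ∈ Finset.range (Fintype.card Q + 1), scQ Q k * n.choose k
      = ∑ k ∈ Finset.range (n + Fintype.card Q + 1), scQ Q k * n.choose k :=
    Finset.sum_subset (Finset.range_subset_range.mpr (by omega)) (fun k _ hk => by
      rw [scQ_eq_zero_of_lt (by simp only [Finset.mem_range] at *; omega), zero_mul])
  rw [e1, e2]

end OrderPoly

section Recursion

variable {P : Type*} [Fintype P] [PartialOrder P]

/-- `I` is a proper down-set of `S`. -/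
def IsPD (S I : Finset P) : Prop :=
  I ⊆ S ∧ (∀ x ∈ S, ∀ y ∈ I, x ≤ y → x ∈ I) ∧ I ≠ S

noncomputable def topFiber (S : Finset P) (k : ℕ)
    (f : {F : {x // x ∈ S} → Fin (k + 1) // Monotone F ∧ Surjective F}) : Finset P :=
  S.filter (fun x => ∀ h : x ∈ S, f.1 ⟨x, h⟩ ≠ Fin.last k)

lemma topFiber_isPD (S : Finset P) (k : ℕ)
    (f : {F : {x // x ∈ S} → Fin (k + 1) // Monotone F ∧ Surjective F}) :
    IsPD S (topFiber S k f) := by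
  obtain ⟨F, hm, hs⟩ := f
  refine ⟨Finset.filter_subset _ _, ?_, ?_⟩
  · intro x hx y hy hxy
    simp only [topFiber, Finset.mem_filter] at hy ⊢
    refine ⟨hx, fun h => ?_⟩
    intro hlast
    apply hy.2 hy.1
    have hle : F ⟨x, h⟩ ≤ F ⟨y, hy.1⟩ := hm (Subtype.mk_le_mk.mpr hxy)
    rw [hlast] at hle
    exact le_antisymm (Fin.le_last _) hle
  · intro hEq
    obtain ⟨z, hz⟩ := hs (Fin.last k)
    have hzmem : z.1 ∈ topFiber S k ⟨F, hm, hs⟩ := by rw [hEq]; exact z.2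
    simp only [topFiber, Finset.mem_filter] at hzmem
    exact hzmem.2 z.2 (by rwa [Subtype.coe_eta])

noncomputable def recEquiv (S : Finset P) (k : ℕ) (I : Finset P) (hI : IsPD S I) :
    {f : {F : {x // x ∈ S} → Fin (k + 1) // Monotone F ∧ Surjective F} // topFiber S k f = I}
      ≃ {g : {x // x ∈ I} → Fin k // Monotone g ∧ Surjective g} where
  toFun f :=
    have hmem : ∀ x (hx : x ∈ I), x ∈ S ∧ ∀ h : x ∈ S, f.1.1 ⟨x, h⟩ ≠ Fin.last k := by
      intro x hx
      rw [← f.2] at hx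
      simpa only [topFiber, Finset.mem_filter] using hx
    have hlt : ∀ x (hx : x ∈ I), (f.1.1 ⟨x, (hmem x hx).1⟩ : ℕ) < k := fun x hx =>
      Fin.val_lt_last ((hmem x hx).2 (hmem x hx).1)
    ⟨fun y => ⟨(f.1.1 ⟨y.1, (hmem y.1 y.2).1⟩ : ℕ), hlt y.1 y.2⟩,
     by
       intro a b hab
       have h1 : (⟨a.1, (hmem a.1 a.2).1⟩ : {x // x ∈ S}) ≤ ⟨b.1, (hmem b.1 b.2).1⟩ :=
         Subtype.mk_le_mk.mpr hab
       exact Fin.mk_le_mk.mpr (f.1.2.1 h1),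
     by
       intro j
       obtain ⟨z, hz⟩ := f.1.2.2 (Fin.castSucc j)
       have hzI : z.1 ∈ I := by
         rw [← f.2]
         simp only [topFiber, Finset.mem_filter]
         refine ⟨z.2, fun h hcon => ?_⟩
         rw [Subtype.coe_eta, hz] at hcon
         exact (Fin.castSucc_lt_last j).ne hcon
       refine ⟨⟨z.1, hzI⟩, ?_⟩
       apply Fin.ext
       show (f.1.1 ⟨z.1, _⟩ : ℕ) = (j : ℕ)
       rw [Subtype.coe_eta, hz]
       simp⟩
  invFun g :=
    ⟨⟨fun z => if h : z.1 ∈ I then Fin.castSucc (g.1 ⟨z.1, h⟩) else Fin.last k,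
      by
        intro a b hab
        show (if h : a.1 ∈ I then Fin.castSucc (g.1 ⟨a.1, h⟩) else Fin.last k)
          ≤ (if h : b.1 ∈ I then Fin.castSucc (g.1 ⟨b.1, h⟩) else Fin.last k)
        by_cases ha : a.1 ∈ I
        · by_cases hb : b.1 ∈ I
          · rw [dif_pos ha, dif_pos hb]
            exact Fin.castSucc_le_castSucc_iff.mpr (g.2.1 (Subtype.mk_le_mk.mpr hab))
          · rw [dif_pos ha, dif_neg hb]
            exact Fin.le_last _
        · have hb : b.1 ∉ I := fun hb => ha (hI.2.1 a.1 a.2 b.1 hb hab)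
          rw [dif_neg ha, dif_neg hb],
      by
        intro v
        by_cases hv : v = Fin.last k
        · obtain ⟨x, hxS, hxI⟩ := Finset.exists_of_ssubset (lt_of_le_of_ne hI.1 hI.2.2)
          refine ⟨⟨x, hxS⟩, ?_⟩
          show (if h : x ∈ I then Fin.castSucc (g.1 ⟨x, h⟩) else Fin.last k) = v
          rw [dif_neg hxI, hv]
        · obtain ⟨j, rfl⟩ := Fin.exists_castSucc_eq.mpr hv
          obtain ⟨y, hy⟩ := g.2.2 j
          refine ⟨⟨y.1, hI.1 y.2⟩, ?_⟩
          show (if h : y.1 ∈ I then Fin.castSucc (g.1 ⟨y.1, h⟩) else Fin.last k) = _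
          rw [dif_pos y.2]
          rw [Subtype.coe_eta, hy]⟩,
     by
       ext x
       simp only [topFiber, Finset.mem_filter]
       constructor
       · rintro ⟨hxS, hx⟩
         by_contra hxI
         exact hx hxS (by rw [dif_neg hxI])
       · intro hxI
         refine ⟨hI.1 hxI, fun h => ?_⟩
         show (if h : x ∈ I then Fin.castSucc (g.1 ⟨x, h⟩) else Fin.last k) ≠ Fin.last k
         rw [dif_pos hxI]
         exact (Fin.castSucc_lt_last _).ne⟩
  left_inv f := by
    apply Subtype.ext; apply Subtype.ext; funext z
    show (if h : z.1 ∈ I then _ else Fin.last k) = f.1.1 z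
    by_cases hz : z.1 ∈ I
    · rw [dif_pos hz]
      exact Fin.ext rfl
    · rw [dif_neg hz]
      rw [← f.2] at hz
      simp only [topFiber, Finset.mem_filter] at hz
      push_neg at hz
      obtain ⟨h, hlast⟩ := hz z.2
      rw [← hlast]
  right_inv g := by
    apply Subtype.ext; funext y
    refine Fin.ext ?_
    show Fin.val (if h : (y : P) ∈ I then Fin.castSucc (g.1 ⟨(y : P), h⟩) else Fin.last k)
      = Fin.val (g.1 y)
    rw [dif_pos y.2]
    rfl

end Recursion

section Main

variable {P : Type*} [Fintype P] [PartialOrder P]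

lemma sc_succ (S : Finset P) (k : ℕ) :
    scQ {x // x ∈ S} (k + 1)
      = ∑ I ∈ Finset.univ.filter (fun I : Finset P => IsPD S I), scQ {x // x ∈ I} k := by
  rw [scQ, card_eq_sum_card_fiber (topFiber S k)]
  rw [← Finset.sum_subset (Finset.subset_univ (Finset.univ.filter fun I : Finset P => IsPD S I))
    (fun I _ hI => ?_)]
  · refine Finset.sum_congr rfl (fun I hI => ?_)
    exact Nat.card_congr (recEquiv S k I (Finset.mem_filter.mp hI).2)
  · rw [Nat.card_eq_zero]
    left
    constructor
    rintro ⟨f, hf⟩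
    simp only [Finset.mem_filter, Finset.mem_univ, true_and] at hI
    exact hI (hf ▸ topFiber_isPD S k f)

noncomputable def NN (S : Finset P) : ℚ :=
  ∑ k ∈ Finset.range (Fintype.card P + 1), (-1 : ℚ) ^ k * scQ {x // x ∈ S} k

lemma scQ_coe_zero_of_lt {S : Finset P} {k : ℕ} (h : S.card < k) :
    scQ {x // x ∈ S} k = 0 :=
  scQ_eq_zero_of_lt (by rwa [Fintype.card_coe])

lemma scQ_zero_of_nonempty {S : Finset P} (h : S.Nonempty) : scQ {x // x ∈ S} 0 = 0 := by
  rw [scQ, Nat.card_eq_zero]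
  left
  constructor
  rintro ⟨f, -, -⟩
  obtain ⟨x, hx⟩ := h
  exact (f ⟨x, hx⟩).elim0

lemma scQ_empty_zero : scQ {x // x ∈ (∅ : Finset P)} 0 = 1 := by
  rw [scQ, Nat.card_eq_one_iff_unique]
  constructor
  · constructor
    rintro ⟨f, -⟩ ⟨g, -⟩
    apply Subtype.ext
    funext x
    exact absurd x.2 (Finset.notMem_empty _)
  · refine ⟨⟨fun x => absurd x.2 (Finset.notMem_empty _), fun a => absurd a.2 (Finset.notMem_empty _), fun b => b.elim0⟩⟩

lemma sum_powerset_neg_one_pow_card_rat {x : Finset P} (h0 : x.Nonempty) :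
    (∑ m ∈ x.powerset, (-1 : ℚ) ^ m.card) = 0 := by
  have := Finset.sum_powerset_neg_one_pow_card_of_nonempty (x := x) h0
  exact_mod_cast congrArg (fun z : ℤ => (z : ℚ)) this

lemma NN_eq (S : Finset P) :
    NN S = if ∀ x ∈ S, ∀ y ∈ S, x ≤ y → x = y then (-1 : ℚ) ^ S.card else 0 := by
  induction S using Finset.strongInduction with
  | _ S ih =>
  rcases Finset.eq_empty_or_nonempty S with rfl | hne
  · rw [if_pos (by simp)]
    rw [NN, Finset.sum_eq_single_of_mem 0 (Finset.mem_range.mpr (by omega))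
      (fun k _ hk => by rw [scQ_coe_zero_of_lt (by simp; omega), Nat.cast_zero, mul_zero])]
    simp [scQ_empty_zero]
  · set M := Fintype.card P with hM
    have hcard : S.card ≤ M := by rw [hM, ← Finset.card_univ]; exact Finset.card_le_card (Finset.subset_univ S)
    have key : NN S = -∑ I ∈ Finset.univ.filter (fun I : Finset P => IsPD S I), NN I := by
      rw [NN, Finset.sum_range_succ']
      rw [scQ_zero_of_nonempty hne]
      simp only [pow_zero, Nat.cast_zero, mul_zero, one_mul, add_zero]
      rw [Finset.sum_congr rfl (fun j _ => by
        rw [sc_succ S j, Nat.cast_sum, Finset.mul_sum])]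
      rw [Finset.sum_comm]
      rw [← Finset.sum_neg_distrib]
      refine Finset.sum_congr rfl (fun I hI => ?_)
      have hIPD : IsPD S I := (Finset.mem_filter.mp hI).2
      have hIlt : I.card < M := by
        have h1 : I ⊂ S := lt_of_le_of_ne hIPD.1 hIPD.2.2
        have := Finset.card_lt_card h1
        omega
      rw [NN, Finset.sum_range_succ, scQ_coe_zero_of_lt hIlt]
      rw [Nat.cast_zero, mul_zero, add_zero, ← Finset.sum_neg_distrib]
      refine Finset.sum_congr rfl (fun j _ => ?_)
      rw [pow_succ]
      ring
    have hIH : ∀ I ∈ Finset.univ.filter (fun I : Finset P => IsPD S I),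
        NN I = if ∀ x ∈ I, ∀ y ∈ I, x ≤ y → x = y then (-1 : ℚ) ^ I.card else 0 := by
      intro I hI
      have hIPD : IsPD S I := (Finset.mem_filter.mp hI).2
      exact ih I (lt_of_le_of_ne hIPD.1 hIPD.2.2)
    rw [Finset.sum_congr rfl hIH] at key
    rw [Finset.sum_ite, Finset.sum_const, smul_zero, add_zero] at key
    set Min := S.filter (fun y => ∀ x ∈ S, x ≤ y → x = y) with hMin
    have hAset : (Finset.univ.filter (fun I : Finset P => IsPD S I)).filter
        (fun I => ∀ x ∈ I, ∀ y ∈ I, x ≤ y → x = y) = Min.powerset.erase S := by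
      ext I
      simp only [Finset.mem_filter, Finset.mem_univ, true_and, Finset.mem_erase,
        Finset.mem_powerset]
      constructor
      · rintro ⟨⟨hsub, hdown, hne'⟩, hanti⟩
        refine ⟨hne', fun y hy => ?_⟩
        rw [hMin, Finset.mem_filter]
        exact ⟨hsub hy, fun x hx hxy => hanti x (hdown x hx y hy hxy) y hy hxy⟩
      · rintro ⟨hne', hsub⟩
        have hsubS : I ⊆ S := hsub.trans (Finset.filter_subset _ _)
        have hmin : ∀ y ∈ I, ∀ x ∈ S, x ≤ y → x = y := by
          intro y hy x hx hxy
          have := hsub hy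
          rw [hMin, Finset.mem_filter] at this
          exact this.2 x hx hxy
        refine ⟨⟨hsubS, fun x hx y hy hxy => ?_, hne'⟩, fun x hx y hy hxy =>
          hmin y hy x (hsubS hx) hxy⟩
        rw [hmin y hy x hx hxy]; exact hy
    rw [hAset] at key
    have hMinne : Min.Nonempty := by
      obtain ⟨m, hm'⟩ := Finset.exists_minimal hne
      have hm : m ∈ S := hm'.1
      have hmin : ∀ x ∈ S, ¬ x < m := fun x hx => hm'.not_lt hx
      refine ⟨m, ?_⟩
      rw [hMin, Finset.mem_filter]
      refine ⟨hm, fun x hx hxm => ?_⟩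
      by_contra hne2
      exact hmin x hx (lt_of_le_of_ne hxm hne2)
    by_cases hanti : ∀ x ∈ S, ∀ y ∈ S, x ≤ y → x = y
    · rw [if_pos hanti]
      have hMS : Min = S := by
        rw [hMin, Finset.filter_eq_self]
        intro y hy x hx hxy
        exact hanti x hx y hy hxy
      rw [hMS] at key
      rw [Finset.sum_erase_eq_sub (Finset.mem_powerset_self S)] at key
      rw [sum_powerset_neg_one_pow_card_rat hne] at key
      rw [key]; ring
    · rw [if_neg hanti]
      have hSnot : S ∉ Min.powerset := by
        rw [Finset.mem_powerset]
        intro hsub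
        apply hanti
        intro x hx y hy hxy
        have := hsub hy
        rw [hMin, Finset.mem_filter] at this
        exact this.2 x hx hxy
      rw [Finset.erase_eq_of_notMem hSnot] at key
      rw [sum_powerset_neg_one_pow_card_rat hMinne] at key
      rw [key]; ring

end Main

section Poly

lemma descPochhammer_eval_neg_one (k : ℕ) :
    (descPochhammer ℚ k).eval (-1) = (-1) ^ k * k.factorial := by
  induction k with
  | zero => simp
  | succ k ih =>
      rw [descPochhammer_succ_right, Polynomial.eval_mul, ih]
      simp only [Polynomial.eval_sub, Polynomial.eval_X, Polynomial.eval_natCast,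
        Nat.factorial_succ, pow_succ]
      push_cast
      ring

lemma eval_neg_one {Q : Type*} [Fintype Q] [PartialOrder Q] (Ω : Polynomial ℚ)
    (hΩ : ∀ n : ℕ, 1 ≤ n →
      Ω.eval (n : ℚ) = (Nat.card {f : Q → Fin n // Monotone f} : ℚ)) :
    Ω.eval (-1) = ∑ k ∈ Finset.range (Fintype.card Q + 1), (-1 : ℚ) ^ k * scQ Q k := by
  set M := Fintype.card Q with hM
  set q : Polynomial ℚ := ∑ k ∈ Finset.range (M + 1),
    Polynomial.C ((scQ Q k : ℚ) / k.factorial) * descPochhammer ℚ k with hq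
  have hfac : ∀ k : ℕ, ((k.factorial : ℚ)) ≠ 0 :=
    fun k => Nat.cast_ne_zero.mpr k.factorial_ne_zero
  have hqe : ∀ n : ℕ, q.eval (n : ℚ) = ∑ k ∈ Finset.range (M + 1),
      (scQ Q k : ℚ) * n.choose k := by
    intro n
    rw [hq, Polynomial.eval_finset_sum]
    refine Finset.sum_congr rfl fun k _ => ?_
    rw [Polynomial.eval_mul, Polynomial.eval_C, descPochhammer_eval_eq_descFactorial]
    have hd : ((n.descFactorial k : ℚ)) = (k.factorial : ℚ) * n.choose k := by
      exact_mod_cast congrArg (fun z : ℕ => (z : ℚ)) (Nat.descFactorial_eq_factorial_mul_choose n k)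
    rw [hd]
    field_simp
  have heq : Ω = q := by
    have hroot : ∀ n : ℕ, (Ω - q).IsRoot (((n + 1 : ℕ)) : ℚ) := by
      intro n
      simp only [Polynomial.IsRoot, Polynomial.eval_sub, sub_eq_zero]
      rw [hΩ (n + 1) (by omega), hqe, countA]
      push_cast
      rfl
    by_contra hne
    have hsub : Ω - q ≠ 0 := sub_ne_zero.mpr hne
    apply hsub
    apply Polynomial.eq_zero_of_infinite_isRoot
    refine Set.infinite_of_injective_forall_mem
      (f := fun n : ℕ => (((n + 1 : ℕ)) : ℚ)) ?_ ?_
    · intro a b hab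
      have : (a + 1 : ℕ) = (b + 1 : ℕ) := Nat.cast_injective hab
      omega
    · intro n
      exact hroot n
  rw [heq, hq, Polynomial.eval_finset_sum]
  refine Finset.sum_congr rfl fun k _ => ?_
  rw [Polynomial.eval_mul, Polynomial.eval_C, descPochhammer_eval_neg_one]
  field_simp

end Poly

theorem stmt_15 {P : Type*} [Fintype P] [PartialOrder P]
    (Ω : Polynomial ℚ)
    (hΩ : ∀ n : ℕ, 1 ≤ n →
      Ω.eval (n : ℚ) = (Nat.card {f : P → Fin n // Monotone f} : ℚ)) :
    Ω.eval (-1) = if ∀ x y : P, x ≤ y → x = y then (-1 : ℚ) ^ Fintype.card P else 0 := by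
  have hsc : ∀ k : ℕ, scQ P k = scQ {x // x ∈ (Finset.univ : Finset P)} k := by
    intro k
    apply Nat.card_congr
    exact
      { toFun := fun f => ⟨fun x => f.1 x.1,
          fun a b hab => f.2.1 hab,
          fun b => by obtain ⟨x, hx⟩ := f.2.2 b; exact ⟨⟨x, Finset.mem_univ x⟩, hx⟩⟩
        invFun := fun f => ⟨fun x => f.1 ⟨x, Finset.mem_univ x⟩,
          fun a b hab => f.2.1 (Subtype.mk_le_mk.mpr hab),
          fun b => by obtain ⟨y, hy⟩ := f.2.2 b; exact ⟨y.1, hy⟩⟩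
        left_inv := fun f => rfl
        right_inv := fun f => rfl }
  have h1 := eval_neg_one Ω hΩ
  have h2 : Ω.eval (-1) = NN (Finset.univ : Finset P) := by
    rw [h1, NN]
    refine Finset.sum_congr rfl fun k _ => by rw [hsc k]
  have hiff : (∀ x ∈ (Finset.univ : Finset P), ∀ y ∈ (Finset.univ : Finset P), x ≤ y → x = y)
      ↔ (∀ x y : P, x ≤ y → x = y) := by
    constructor
    · intro h x y hxy; exact h x (Finset.mem_univ x) y (Finset.mem_univ y) hxy
    · intro h x _ y _ hxy; exact h x y hxy
  rw [h2, NN_eq, Finset.card_univ, if_congr hiff rfl rfl]
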